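/- arXiv:0712.1507 — 4 statements merged into one kernel-verified Lean document; each statement's English description precedes it below -/
import Mathlib

section
/- Under the lower length bound ℓ_e ≥ ℓ₀ > 0, the adjoint of the discrete exterior derivative d: 𝒢 → ℓ²(E) is given by (d*η)(v) = P_v({(1/ℓ_e)·(±η_e)}_{e∈E_v}), where the sign is + if v = ∂₊e and − if v = ∂₋e, and P_v is the orthogonal projection of ℂ^{E_v} onto 𝒢_v. -/
open Finset

local notation "conj'" => starRingEnd ℂ

/-- Adjoint of the discrete exterior derivative: if `D ∈ 𝒢` is the orthogonal projection of
`Jη := {(1/ℓ_e)·(±η_e)}` onto `𝒢` (i.e. `Jη − D ⟂ 𝒢`), then `D` satisfies the defining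
identity of the adjoint: `⟨dF, η⟩_{ℓ²(E)} = ⟨F, D⟩_𝒢` for all `F ∈ 𝒢`.  Here `𝒢^max` is
modelled as `E → ℂ × ℂ` (value at `∂₋e`, value at `∂₊e`), `(dF)_e = F_e(∂₊e) − F_e(∂₋e)`,
`⟨η,η'⟩_{ℓ²(E)} = Σ_e η_e conj η'_e / ℓ_e` and `⟨F,G⟩_𝒢 = Σ_e (F₋ conj G₋ + F₊ conj G₊)`. -/
theorem stmt3 {E : Type*} [Fintype E] (ℓ : E → ℝ) (ℓ₀ : ℝ) (h₀ : 0 < ℓ₀)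
    (hℓ : ∀ e, ℓ₀ ≤ ℓ e) (𝒢 : Submodule ℂ (E → ℂ × ℂ)) (η : E → ℂ) (D : E → ℂ × ℂ)
    (hD : D ∈ 𝒢)
    (hproj : ∀ G ∈ 𝒢, ∑ e : E,
        (((-(η e) / (ℓ e : ℂ)) - (D e).1) * conj' ((G e).1) +
          ((η e / (ℓ e : ℂ)) - (D e).2) * conj' ((G e).2)) = 0) :
    ∀ F ∈ 𝒢, ∑ e : E, ((F e).2 - (F e).1) * conj' (η e) / (ℓ e : ℂ) =
      ∑ e : E, ((F e).1 * conj' ((D e).1) + (F e).2 * conj' ((D e).2)) := by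
  intro F hF
  have h := congrArg conj' (hproj F hF)
  rw [map_sum, map_zero] at h
  rw [← sub_eq_zero, ← Finset.sum_sub_distrib, ← h]
  refine Finset.sum_congr rfl fun e _ => ?_
  have hne : (ℓ e : ℂ) ≠ 0 := by
    exact_mod_cast (lt_of_lt_of_le h₀ (hℓ e)).ne'
  simp only [map_add, map_mul, map_sub, map_div₀, map_neg, Complex.conj_ofReal,
    RingHom.id_apply, Complex.conj_conj, RingHomCompTriple.comp_apply]
  field_simp
  ring
end

section
/- Let λ ∈ (0, π²). Then λ is an eigenvalue of the metric graph Laplacian Δ_𝒢 on a finite equilateral metric graph with vertex space 𝒢 if and only if 1 − cos√λ is an eigenvalue of the discrete generalised Laplacian Δ̂_𝒢, with equal multiplicities; the map F ↦ β(λ)F (edgewise interpolation by fundamental solutions) is a linear isomorphism from ker(Δ̂_𝒢 − (1−cos√λ)) onto ker(Δ_𝒢 − λ). -/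
open Set


noncomputable def mfun (c a b : ℂ) : ℝ → ℂ := fun x => a * Complex.cos (c * x) + b * Complex.sin (c * x)

lemma hdsin (c : ℂ) (x : ℝ) :
    HasDerivAt (fun t : ℝ => Complex.sin (c * t)) (c * Complex.cos (c * x)) x := by
  have h := ((hasDerivAt_id (x : ℂ)).const_mul c).csin
  simpa [mul_comm] using h.comp_ofReal

lemma hdcos (c : ℂ) (x : ℝ) :
    HasDerivAt (fun t : ℝ => Complex.cos (c * t)) (-(c * Complex.sin (c * x))) x := by
  have h := ((hasDerivAt_id (x : ℂ)).const_mul c).ccos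
  simpa [mul_comm] using h.comp_ofReal

lemma mfun_hasDeriv (c a b : ℂ) (x : ℝ) :
    HasDerivAt (mfun c a b) (mfun c (b * c) (-(a * c)) x) x := by
  have := ((hdcos c x).const_mul a).add ((hdsin c x).const_mul b)
  refine this.congr_deriv ?_
  unfold mfun; ring

lemma mfun_deriv (c a b : ℂ) : deriv (mfun c a b) = mfun c (b * c) (-(a * c)) :=
  funext fun x => (mfun_hasDeriv c a b x).deriv

lemma mfun_deriv2 (c a b : ℂ) (x : ℝ) :
    deriv (deriv (mfun c a b)) x = -(c ^ 2) * mfun c a b x := by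
  rw [mfun_deriv, mfun_deriv]; unfold mfun; ring

lemma mfun_contDiff (c a b : ℂ) : ContDiff ℝ 2 (mfun c a b) := by
  have hre : ContDiff ℝ 2 (fun x : ℝ => c * (x : ℂ)) :=
    contDiff_const.mul (Complex.ofRealCLM.contDiff.of_le le_top)
  have hs : ContDiff ℝ 2 (fun x : ℝ => Complex.sin (c * x)) :=
    (Complex.contDiff_sin.restrict_scalars ℝ).comp hre
  have hc : ContDiff ℝ 2 (fun x : ℝ => Complex.cos (c * x)) :=
    (Complex.contDiff_cos.restrict_scalars ℝ).comp hre
  exact (contDiff_const.mul hc).add (contDiff_const.mul hs)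

lemma sol_unique (c : ℂ) (hc : c ≠ 0) (f : ℝ → ℂ) (hf2 : ContDiff ℝ 2 f)
    (hode : ∀ x, deriv (deriv f) x = -(c ^ 2) * f x) :
    f = mfun c (f 0) (deriv f 0 / c) := by
  have hf2' : ContDiff ℝ ((1 : ℕ) + 1) f := by exact_mod_cast hf2
  have hD : Differentiable ℝ f := hf2.differentiable (by norm_num)
  have hD' : Differentiable ℝ (deriv f) := by
    have := (contDiff_succ_iff_deriv.mp hf2').2.2
    exact this.differentiable (by norm_num)
  set H : ℝ → ℂ := fun x => c * f x * Complex.cos (c * x) - deriv f x * Complex.sin (c * x) with hHdef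
  set K : ℝ → ℂ := fun x => c * f x * Complex.sin (c * x) + deriv f x * Complex.cos (c * x) with hKdef
  have hH : ∀ x, HasDerivAt H 0 x := by
    intro x
    have h1 := (((hD x).hasDerivAt.const_mul c).mul (hdcos c x)).sub
      ((hD' x).hasDerivAt.mul (hdsin c x))
    refine h1.congr_deriv ?_
    rw [hode x]; ring
  have hK : ∀ x, HasDerivAt K 0 x := by
    intro x
    have h1 := (((hD x).hasDerivAt.const_mul c).mul (hdsin c x)).add
      ((hD' x).hasDerivAt.mul (hdcos c x))
    refine h1.congr_deriv ?_
    rw [hode x]; ring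
  have hHc : ∀ x, H x = H 0 := fun x =>
    is_const_of_deriv_eq_zero (fun y => (hH y).differentiableAt) (fun y => (hH y).deriv) x 0
  have hKc : ∀ x, K x = K 0 := fun x =>
    is_const_of_deriv_eq_zero (fun y => (hK y).differentiableAt) (fun y => (hK y).deriv) x 0
  funext x
  have e1 := hHc x
  have e2 := hKc x
  simp only [hHdef, hKdef, Complex.ofReal_zero, mul_zero, Complex.cos_zero, Complex.sin_zero,
    mul_one, mul_zero, sub_zero, add_zero, zero_add] at e1 e2
  have pyth := Complex.sin_sq_add_cos_sq (c * x)
  unfold mfun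
  field_simp
  linear_combination Complex.cos (c * x) * e1 + Complex.sin (c * x) * e2 - c * f x * pyth

/-- Spectral relation at `λ ∈ (0,π²)` on a finite equilateral metric graph (`ℓ_e = 1`):
`λ` is an eigenvalue of the metric Laplacian `Δ_𝒢` iff `1 − cos √λ` is an eigenvalue of the
discrete generalised Laplacian `Δ̂_𝒢`, and interpolation by fundamental solutions
`B = β(λ)` is a (linear) bijection from the discrete eigenspace onto the metric eigenspace.
The discrete eigenspace is `{F ∈ 𝒢 : (F − σF) − (1 − cos √λ)F ⟂ 𝒢}` (i.e.
`P(F − σF) = (1 − cos√λ)F`), and the metric eigenspace consists of the edgewise `C²`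
solutions of `−f″ = λf` whose boundary values lie in `𝒢` and whose oriented derivative
values lie in `𝒢ᗮ`. -/
theorem stmt11 {E : Type*} [Fintype E]
    (𝒢 : Submodule ℂ (EuclideanSpace ℂ (E × Bool)))
    (lam : ℝ) (h1 : 0 < lam) (h2 : lam < Real.pi ^ 2)
    (s : ℂ) (hs : s = (Real.sqrt lam : ℂ))
    (bval obval : (E → ℝ → ℂ) → EuclideanSpace ℂ (E × Bool))
    (hbval : ∀ f p, bval f p = if p.2 then f p.1 1 else f p.1 0)
    (hobval : ∀ f p, obval f p = if p.2 then deriv (f p.1) 1 else -deriv (f p.1) 0)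
    (σ : EuclideanSpace ℂ (E × Bool) → EuclideanSpace ℂ (E × Bool))
    (hσ : ∀ F p, σ F p = F (p.1, !p.2))
    (B : EuclideanSpace ℂ (E × Bool) → (E → ℝ → ℂ))
    (hB : ∀ F e x, B F e x =
      F (e, false) * Complex.sin (s * (1 - (x : ℂ))) / Complex.sin s +
        F (e, true) * Complex.sin (s * (x : ℂ)) / Complex.sin s)
    (Disc : Set (EuclideanSpace ℂ (E × Bool)))
    (hDisc : Disc = {F | F ∈ 𝒢 ∧ (F - σ F) - (1 - Complex.cos s) • F ∈ 𝒢ᗮ})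
    (Met : Set (E → ℝ → ℂ))
    (hMet : Met = {f | (∀ e, ContDiff ℝ 2 (f e)) ∧
        (∀ e x, deriv (deriv (f e)) x = -(lam : ℂ) * f e x) ∧
        bval f ∈ 𝒢 ∧ obval f ∈ 𝒢ᗮ}) :
    Set.BijOn B Disc Met ∧ ((∃ F ∈ Disc, F ≠ 0) ↔ ∃ f ∈ Met, f ≠ 0) := by
  have hr0 : 0 < Real.sqrt lam := Real.sqrt_pos.mpr h1
  have hrpi : Real.sqrt lam < Real.pi := by
    have h3 : Real.sqrt lam < Real.sqrt (Real.pi ^ 2) := Real.sqrt_lt_sqrt h1.le h2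
    simpa [Real.sqrt_sq Real.pi_pos.le] using h3
  have hsinR : Real.sin (Real.sqrt lam) ≠ 0 := (Real.sin_pos_of_pos_of_lt_pi hr0 hrpi).ne'
  have hsin0 : Complex.sin s ≠ 0 := by
    rw [hs, ← Complex.ofReal_sin]
    exact_mod_cast hsinR
  have hsne : s ≠ 0 := by rw [hs]; exact_mod_cast hr0.ne'
  have hs2 : s ^ 2 = (lam : ℂ) := by
    rw [hs]
    norm_cast
    exact Real.sq_sqrt h1.le
  -- B F e as a model function
  have hBm : ∀ F e, B F e = mfun s (F (e, false))
      ((F (e, true) - F (e, false) * Complex.cos s) / Complex.sin s) := by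
    intro F e; funext x
    rw [hB]; unfold mfun
    have hx : s * (1 - (x : ℂ)) = s - s * x := by ring
    rw [hx, Complex.sin_sub]
    field_simp
    ring
  -- boundary values of B F recover F
  have hbvalB : ∀ F, bval (B F) = F := by
    intro F; ext p
    obtain ⟨e, b⟩ := p
    rw [hbval]
    cases b <;>
      simp [hB, mul_div_assoc, div_self hsin0]
  -- oriented derivative values of B F
  have hobvalB : ∀ F, obval (B F) = (s / Complex.sin s) • (Complex.cos s • F - σ F) := by
    intro F; ext p
    obtain ⟨e, b⟩ := p
    have hder : deriv (B F e) = mfun s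
        (((F (e, true) - F (e, false) * Complex.cos s) / Complex.sin s) * s)
        (-(F (e, false) * s)) := by
      rw [hBm, mfun_deriv]
    rw [hobval]
    have pyth := Complex.sin_sq_add_cos_sq s
    have hσf : σ F (e, false) = F (e, true) := by rw [hσ]; rfl
    have hσt : σ F (e, true) = F (e, false) := by rw [hσ]; rfl
    cases b
    · simp only [PiLp.smul_apply, PiLp.sub_apply, smul_eq_mul, hσf, hder,
        if_neg (by simp : ¬((e, false).2 = true))]
      unfold mfun
      push_cast
      simp only [mul_zero, Complex.cos_zero, Complex.sin_zero, mul_one]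
      field_simp
      ring
    · simp only [PiLp.smul_apply, PiLp.sub_apply, smul_eq_mul, hσt, hder,
        if_pos (rfl : (e, true).2 = true)]
      unfold mfun
      push_cast
      simp only [mul_one]
      field_simp
      linear_combination (-(F (e, false))) * pyth
  -- MapsTo
  have hmaps : Set.MapsTo B Disc Met := by
    intro F hF
    rw [hDisc] at hF
    rw [hMet]
    refine ⟨fun e => ?_, fun e x => ?_, ?_, ?_⟩
    · rw [hBm]; exact mfun_contDiff _ _ _
    · rw [hBm, mfun_deriv2, hs2]
    · rw [hbvalB]; exact hF.1
    · rw [hobvalB]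
      refine Submodule.smul_mem _ _ ?_
      have hexpr : Complex.cos s • F - σ F = (F - σ F) - (1 - Complex.cos s) • F := by
        ext p
        simp only [PiLp.smul_apply, PiLp.sub_apply, smul_eq_mul]
        ring
      rw [hexpr]; exact hF.2
  -- SurjOn
  have hsurj : Set.SurjOn B Disc Met := by
    intro f hf
    rw [hMet] at hf
    obtain ⟨hC, hode, hbg, hog⟩ := hf
    have hsol : ∀ e, f e = mfun s (f e 0) (deriv (f e) 0 / s) := by
      intro e
      refine sol_unique s hsne (f e) (hC e) (fun x => ?_)
      rw [hs2]; exact hode e x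
    set F := bval f with hF
    have hBF : B F = f := by
      funext e
      rw [hBm]
      have hF0 : F (e, false) = f e 0 := by simp [hF, hbval]
      have hF1 : F (e, true) = f e 1 := by simp [hF, hbval]
      have h11 : f e 1 = f e 0 * Complex.cos s + (deriv (f e) 0 / s) * Complex.sin s := by
        conv_lhs => rw [hsol e]
        unfold mfun
        norm_num
      have harg : (F (e, true) - F (e, false) * Complex.cos s) / Complex.sin s
          = deriv (f e) 0 / s := by
        rw [hF0, hF1, h11]
        field_simp
        ring
      rw [harg, hF0]
      exact (hsol e).symm
    refine ⟨F, ?_, hBF⟩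
    rw [hDisc]
    refine ⟨hbg, ?_⟩
    have h2 : obval f = (s / Complex.sin s) • (Complex.cos s • F - σ F) := by
      rw [← hBF, hobvalB]
    have hone : (Complex.sin s / s) * (s / Complex.sin s) = 1 := by field_simp
    have h3 : Complex.cos s • F - σ F = (Complex.sin s / s) • obval f := by
      rw [h2, smul_smul, hone, one_smul]
    have hexpr : (F - σ F) - (1 - Complex.cos s) • F = Complex.cos s • F - σ F := by
      ext p
      simp only [PiLp.smul_apply, PiLp.sub_apply, smul_eq_mul]
      ring
    rw [hexpr, h3]
    exact Submodule.smul_mem _ _ hog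
  have hinj : Set.InjOn B Disc := by
    intro F _ F' _ h
    have := congrArg bval h
    rwa [hbvalB, hbvalB] at this
  refine ⟨⟨hmaps, hinj, hsurj⟩, ?_⟩
  constructor
  · rintro ⟨F, hF, hF0⟩
    refine ⟨B F, hmaps hF, fun hc => hF0 ?_⟩
    rw [← hbvalB F, hc]
    ext p
    rw [hbval]
    simp
  · rintro ⟨f, hf, hf0⟩
    obtain ⟨F, hFD, hBF⟩ := hsurj hf
    refine ⟨F, hFD, ?_⟩
    rintro rfl
    apply hf0
    rw [← hBF]
    funext e x
    simp [hB]
end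

section
/- Let G be a finite simple graph (no loops, no double edges) with all edge lengths 1 and vertex space 𝒢 with generalised discrete Laplacian Δ̂_𝒢 = Id − M_𝒢, where M_𝒢 is the principle part. Then for every t > 0, tr e^{−tΔ̂_𝒢} = e^{−t} Σ_{n=0}^∞ (tⁿ/n!) Σ_{c ∈ C_n} W_𝒢(c), where C_n is the set of properly closed combinatorial paths of length n and W_𝒢(c) = tr( A_𝒢(v₀,v₁) A_𝒢(v₁,v₂) ⋯ A_𝒢(v_{n−1},v₀) ). -/
open Finset

local notation "conj'" => starRingEnd ℂ

/-- The oriented edges (flags) of a simple graph: `𝒢^max = Flag G → ℂ`, the coordinate at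
`(v,w)` being the component at the vertex `v` of the edge `vw`. -/
abbrev GFlag {V : Type*} (G : SimpleGraph V) := {p : V × V // G.Adj p.1 p.2}

/-- The generalised adjacency transfer `A^max(v,w)` (extended by zero to all of `𝒢^max`):
it sends `F` to the vector supported at the flag `(v,w)` with value `F(w,v)`. -/
noncomputable def transferMap {V : Type*} [DecidableEq V] (G : SimpleGraph V)
    {v w : V} (h : G.Adj v w) : Module.End ℂ (GFlag G → ℂ) :=
  (LinearMap.proj (⟨(w, v), h.symm⟩ : GFlag G)).smulRight
    (Pi.single (⟨(v, w), h⟩ : GFlag G) 1)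

/-- `A_𝒢(v,w) = P_v A^max(v,w) P_w`. -/
noncomputable def Amap {V : Type*} [DecidableEq V] (G : SimpleGraph V)
    (P : V → Module.End ℂ (GFlag G → ℂ)) {v w : V} (h : G.Adj v w) :
    Module.End ℂ (GFlag G → ℂ) :=
  P v ∘ₗ transferMap G h ∘ₗ P w

/-- Properly closed combinatorial paths of length `n ≥ 1`: `(v₀,…,v_{n−1},v₀)` with
consecutive vertices adjacent (cyclically). -/
abbrev ClosedPath {V : Type*} (G : SimpleGraph V) (n : ℕ) :=
  {c : Fin n → V // ∀ i : Fin n, G.Adj (c i) (c (finRotate n i))}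

/-- The weight `W_𝒢(c) = tr(A_𝒢(v₀,v₁)⋯A_𝒢(v_{n−1},v₀))` of a properly closed path. -/
noncomputable def pathWeight {V : Type*} [DecidableEq V] (G : SimpleGraph V)
    (P : V → Module.End ℂ (GFlag G → ℂ)) {n : ℕ} (c : ClosedPath G n) : ℂ :=
  LinearMap.trace ℂ (GFlag G → ℂ) ((List.ofFn fun i : Fin n => Amap G P (c.2 i)).prod)

set_option linter.unusedSectionVars false
section Aux

variable {V : Type*} [DecidableEq V] {G : SimpleGraph V}
  {P : V → Module.End ℂ (GFlag G → ℂ)}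

/-- disjointness of the projections -/
theorem PP_eq_zero (hloc : ∀ v (F : GFlag G → ℂ) (p : GFlag G), p.1.1 ≠ v → P v F p = 0)
    (hloc' : ∀ v (F : GFlag G → ℂ), (∀ p : GFlag G, p.1.1 = v → F p = 0) → P v F = 0)
    {v w : V} (hvw : v ≠ w) : P v * P w = 0 := by
  apply LinearMap.ext; intro F
  show P v (P w F) = 0
  exact hloc' v _ (fun p hp => hloc w F p (by rw [hp]; exact hvw))

theorem P_mul_Amap (hidem : ∀ v, P v ∘ₗ P v = P v) {v w : V} (h : G.Adj v w) :
    P v * Amap G P h = Amap G P h := by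
  show P v ∘ₗ (P v ∘ₗ transferMap G h ∘ₗ P w) = P v ∘ₗ transferMap G h ∘ₗ P w
  rw [← LinearMap.comp_assoc, hidem]

theorem Amap_mul_P (hidem : ∀ v, P v ∘ₗ P v = P v) {v w : V} (h : G.Adj v w) :
    Amap G P h * P w = Amap G P h := by
  show (P v ∘ₗ transferMap G h ∘ₗ P w) ∘ₗ P w = P v ∘ₗ transferMap G h ∘ₗ P w
  rw [LinearMap.comp_assoc, LinearMap.comp_assoc, hidem]

theorem P_mul_Amap_ne (hloc : ∀ v (F : GFlag G → ℂ) (p : GFlag G), p.1.1 ≠ v → P v F p = 0)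
    (hloc' : ∀ v (F : GFlag G → ℂ), (∀ p : GFlag G, p.1.1 = v → F p = 0) → P v F = 0)
    {u v w : V} (h : G.Adj v w) (huv : u ≠ v) : P u * Amap G P h = 0 := by
  show P u ∘ₗ (P v ∘ₗ transferMap G h ∘ₗ P w) = 0
  rw [← LinearMap.comp_assoc, show P u ∘ₗ P v = 0 from PP_eq_zero hloc hloc' huv]
  exact LinearMap.zero_comp _

theorem Amap_mul_P_ne (hloc : ∀ v (F : GFlag G → ℂ) (p : GFlag G), p.1.1 ≠ v → P v F p = 0)
    (hloc' : ∀ v (F : GFlag G → ℂ), (∀ p : GFlag G, p.1.1 = v → F p = 0) → P v F = 0)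
    {u v w : V} (h : G.Adj v w) (huw : w ≠ u) : Amap G P h * P u = 0 := by
  show (P v ∘ₗ transferMap G h ∘ₗ P w) ∘ₗ P u = 0
  rw [LinearMap.comp_assoc, LinearMap.comp_assoc,
    show P w ∘ₗ P u = 0 from PP_eq_zero hloc hloc' huw]
  simp

variable (G P) in
/-- `A'` : the transfer operator extended by zero to non-adjacent pairs. -/
noncomputable def Aop [DecidableRel G.Adj] (v w : V) : Module.End ℂ (GFlag G → ℂ) :=
  if h : G.Adj v w then Amap G P h else 0

variable [DecidableRel G.Adj]

theorem Aop_mul_Aop_ne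
    (hloc : ∀ v (F : GFlag G → ℂ) (p : GFlag G), p.1.1 ≠ v → P v F p = 0)
    (hloc' : ∀ v (F : GFlag G → ℂ), (∀ p : GFlag G, p.1.1 = v → F p = 0) → P v F = 0)
    (hidem : ∀ v, P v ∘ₗ P v = P v)
    {a b c d : V} (hbc : b ≠ c) : Aop G P a b * Aop G P c d = 0 := by
  unfold Aop
  by_cases h1 : G.Adj a b
  · by_cases h2 : G.Adj c d
    · rw [dif_pos h1, dif_pos h2, ← P_mul_Amap hidem h2, ← mul_assoc,
        Amap_mul_P_ne hloc hloc' h1 hbc, zero_mul]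
    · rw [dif_neg h2, mul_zero]
  · rw [dif_neg h1, zero_mul]

variable (G P) in
/-- The product of transfer operators along a chain of vertices. -/
noncomputable def chainProd {n : ℕ} (c : Fin (n + 1) → V) : Module.End ℂ (GFlag G → ℂ) :=
  (List.ofFn fun i : Fin n => Aop G P (c i.castSucc) (c i.succ)).prod

theorem chainProd_snoc {n : ℕ} (c : Fin (n + 1) → V) (w : V) :
    chainProd G P (Fin.snoc c w) = chainProd G P c * Aop G P (c (Fin.last n)) w := by
  unfold chainProd
  rw [List.ofFn_succ', List.concat_eq_append, List.prod_append, List.prod_singleton]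
  congr 1
  · simp [-Fin.castSucc_succ, Fin.succ_castSucc]
  · rw [Fin.succ_last]
    congr 1
    · exact Fin.snoc_castSucc ..
    · exact Fin.snoc_last ..


theorem chainProd_eq_zero {n : ℕ} {c : Fin (n + 1) → V} {i : Fin n}
    (h : ¬ G.Adj (c i.castSucc) (c i.succ)) : chainProd G P c = 0 := by
  unfold chainProd
  apply List.prod_eq_zero
  rw [List.mem_ofFn]
  exact ⟨i, by simp only [Aop]; rw [dif_neg h]⟩

theorem P_mul_chainProd (hidem : ∀ v, P v ∘ₗ P v = P v)
    {n : ℕ} {c : Fin (n + 1 + 1) → V} (h : G.Adj (c 0) (c 1)) :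
    P (c 0) * chainProd G P c = chainProd G P c := by
  unfold chainProd
  rw [List.ofFn_succ, List.prod_cons, ← mul_assoc]
  congr 1
  have h0 : (0 : Fin (n+1)).castSucc = (0 : Fin (n+2)) := rfl
  have h1 : (0 : Fin (n+1)).succ = (1 : Fin (n+2)) := rfl
  rw [h0, h1]; simp only [Aop]; rw [dif_pos h, P_mul_Amap hidem]

theorem chainProd_snoc_mul_P (hidem : ∀ v, P v ∘ₗ P v = P v)
    {n : ℕ} (c : Fin (n + 1) → V) (a : V) :
    chainProd G P (Fin.snoc c a) * P a = chainProd G P (Fin.snoc c a) := by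
  rw [chainProd_snoc, mul_assoc]
  congr 1
  simp only [Aop]
  by_cases h : G.Adj (c (Fin.last n)) a
  · rw [dif_pos h, Amap_mul_P hidem]
  · rw [dif_neg h, zero_mul]

theorem chainProd_mul_P (hidem : ∀ v, P v ∘ₗ P v = P v)
    {n : ℕ} (c : Fin (n + 1 + 1) → V) :
    chainProd G P c * P (c (Fin.last (n+1))) = chainProd G P c := by
  have := chainProd_snoc_mul_P (P := P) hidem (Fin.init c) (c (Fin.last (n+1)))
  rwa [Fin.snoc_init_self] at this

theorem chainProd_mul_Aop_ne
    (hloc : ∀ v (F : GFlag G → ℂ) (p : GFlag G), p.1.1 ≠ v → P v F p = 0)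
    (hloc' : ∀ v (F : GFlag G → ℂ), (∀ p : GFlag G, p.1.1 = v → F p = 0) → P v F = 0)
    (hidem : ∀ v, P v ∘ₗ P v = P v)
    {n : ℕ} (c : Fin (n + 1 + 1) → V) {v w : V} (hv : c (Fin.last (n+1)) ≠ v) :
    chainProd G P c * Aop G P v w = 0 := by
  conv_lhs => rw [← Fin.snoc_init_self c]
  rw [chainProd_snoc, mul_assoc, Aop_mul_Aop_ne hloc hloc' hidem
    hv, mul_zero]

variable (G P) in
/-- The equivalence `(Fin (n+1) → V) × V ≃ (Fin (n+2) → V)` by appending. -/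
def snocEquiv (n : ℕ) : ((Fin (n + 1) → V) × V) ≃ (Fin (n + 2) → V) where
  toFun p := Fin.snoc p.1 p.2
  invFun c := (Fin.init c, c (Fin.last (n+1)))
  left_inv p := by simp [Fin.init_snoc, Fin.snoc_last]
  right_inv c := Fin.snoc_init_self c


theorem fin_snoc_succ {α : Type*} {n : ℕ} (d : Fin (n+1) → α) (i : Fin (n+1)) :
    (Fin.snoc d (d 0) : Fin (n+2) → α) i.succ = d (finRotate (n+1) i) := by
  rw [finRotate_succ_apply]
  refine Fin.lastCases ?_ (fun j => ?_) i
  · rw [Fin.succ_last, Fin.snoc_last, Fin.last_add_one]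
  · rw [Fin.succ_castSucc, Fin.snoc_castSucc, Fin.coeSucc_eq_succ]

theorem chainProd_one (c : Fin 2 → V) : chainProd G P c = Aop G P (c 0) (c 1) := by
  simp [chainProd]

variable [Fintype V]

theorem Aop_sum_pow
    (hloc : ∀ v (F : GFlag G → ℂ) (p : GFlag G), p.1.1 ≠ v → P v F p = 0)
    (hloc' : ∀ v (F : GFlag G → ℂ), (∀ p : GFlag G, p.1.1 = v → F p = 0) → P v F = 0)
    (hidem : ∀ v, P v ∘ₗ P v = P v) (n : ℕ) :
    (∑ v : V, ∑ w : V, Aop G P v w) ^ (n + 1) = ∑ c : Fin (n + 2) → V, chainProd G P c := by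
  induction n with
  | zero =>
    rw [pow_one]
    refine (Fintype.sum_prod_type' (f := fun v w => Aop G P v w)).symm.trans
      (Fintype.sum_equiv (piFinTwoEquiv fun _ => V) _ _ fun c => ?_).symm
    rw [chainProd_one]
    rfl
  | succ n ih =>
    rw [pow_succ, ih, Finset.sum_mul]
    have hc : ∀ c : Fin (n+2) → V, chainProd G P c * (∑ v : V, ∑ w : V, Aop G P v w)
        = ∑ w : V, chainProd G P (Fin.snoc c w) := by
      intro c
      rw [Finset.mul_sum, Finset.sum_eq_single (c (Fin.last (n+1)))]
      · rw [Finset.mul_sum]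
        exact Finset.sum_congr rfl fun w _ => (chainProd_snoc c w).symm
      · intro v _ hv
        rw [Finset.mul_sum]
        exact Finset.sum_eq_zero fun w _ =>
          chainProd_mul_Aop_ne hloc hloc' hidem c (Ne.symm hv)
      · intro h; exact absurd (Finset.mem_univ _) h
    rw [Finset.sum_congr rfl fun c _ => hc c]
    exact (Fintype.sum_prod_type'
        (f := fun (c : Fin (n+2) → V) w => chainProd G P (Fin.snoc c w))).symm.trans
      (Fintype.sum_equiv (snocEquiv (n+1)) _ _ fun p => rfl)

theorem trace_chainProd_ne
    (hloc : ∀ v (F : GFlag G → ℂ) (p : GFlag G), p.1.1 ≠ v → P v F p = 0)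
    (hloc' : ∀ v (F : GFlag G → ℂ), (∀ p : GFlag G, p.1.1 = v → F p = 0) → P v F = 0)
    (hidem : ∀ v, P v ∘ₗ P v = P v)
    {n : ℕ} (c : Fin (n+2) → V) (hne : c (Fin.last (n+1)) ≠ c 0) :
    LinearMap.trace ℂ (GFlag G → ℂ) (chainProd G P c) = 0 := by
  by_cases h : G.Adj (c 0) (c 1)
  · calc LinearMap.trace ℂ (GFlag G → ℂ) (chainProd G P c)
        = LinearMap.trace ℂ (GFlag G → ℂ) (chainProd G P c * P (c (Fin.last (n+1)))) := by
          rw [chainProd_mul_P hidem]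
      _ = LinearMap.trace ℂ (GFlag G → ℂ) (P (c (Fin.last (n+1))) * chainProd G P c) :=
          LinearMap.trace_mul_comm ℂ _ _
      _ = LinearMap.trace ℂ (GFlag G → ℂ)
            (P (c (Fin.last (n+1))) * (P (c 0) * chainProd G P c)) := by
          rw [P_mul_chainProd hidem h]
      _ = 0 := by
          rw [← mul_assoc, PP_eq_zero hloc hloc' hne, zero_mul, map_zero]
  · have h0 : (0 : Fin (n+1)).castSucc = (0 : Fin (n+2)) := rfl
    have h1 : (0 : Fin (n+1)).succ = (1 : Fin (n+2)) := rfl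
    rw [chainProd_eq_zero (i := 0) (by rw [h0, h1]; exact h), map_zero]

theorem trace_sum_chainProd [DecidableEq (GFlag G)]
    (hloc : ∀ v (F : GFlag G → ℂ) (p : GFlag G), p.1.1 ≠ v → P v F p = 0)
    (hloc' : ∀ v (F : GFlag G → ℂ), (∀ p : GFlag G, p.1.1 = v → F p = 0) → P v F = 0)
    (hidem : ∀ v, P v ∘ₗ P v = P v) (n : ℕ) :
    ∑ c : Fin (n+2) → V, LinearMap.trace ℂ (GFlag G → ℂ) (chainProd G P c)
      = ∑ d : ClosedPath G (n+1), pathWeight G P d := by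
  refine (Finset.sum_of_injOn
    (fun d : ClosedPath G (n+1) => Fin.snoc d.1 (d.1 0)) ?_ (fun _ _ => Finset.mem_univ _)
    ?_ ?_).symm
  · intro d _ d' _ h
    have h' := congrArg Fin.init h
    rw [Fin.init_snoc, Fin.init_snoc] at h'
    exact Subtype.ext h'
  · intro c _ hc
    by_cases hadj : ∀ i : Fin (n+1), G.Adj (c i.castSucc) (c i.succ)
    · by_cases hcl : c (Fin.last (n+1)) = c 0
      · exfalso
        apply hc
        have h2 : Fin.snoc (Fin.init c) (Fin.init c 0) = c := by
          have h5 : Fin.init c 0 = c 0 := rfl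
          rw [h5, ← hcl, Fin.snoc_init_self]
        refine ⟨⟨Fin.init c, fun i => ?_⟩, by simp, h2⟩
        have h3 : Fin.init c (finRotate (n+1) i) = c i.succ := by
          rw [← fin_snoc_succ (Fin.init c) i, h2]
        have h4 : Fin.init c i = c i.castSucc := rfl
        rw [h3, h4]
        exact hadj i
      · exact trace_chainProd_ne hloc hloc' hidem c hcl
    · push_neg at hadj
      obtain ⟨i, hi⟩ := hadj
      rw [chainProd_eq_zero hi, map_zero]
  · intro d _
    unfold pathWeight chainProd
    congr 2
    apply congrArg List.ofFn
    funext i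
    show Amap G P (d.2 i)
      = Aop G P ((Fin.snoc d.1 (d.1 0) : Fin (n+2) → V) i.castSucc)
        ((Fin.snoc d.1 (d.1 0) : Fin (n+2) → V) i.succ)
    rw [Fin.snoc_castSucc, fin_snoc_succ]
    simp only [Aop]
    rw [dif_pos (d.2 i)]


theorem Q_mul_Aop
    (hloc : ∀ v (F : GFlag G → ℂ) (p : GFlag G), p.1.1 ≠ v → P v F p = 0)
    (hloc' : ∀ v (F : GFlag G → ℂ), (∀ p : GFlag G, p.1.1 = v → F p = 0) → P v F = 0)
    (hidem : ∀ v, P v ∘ₗ P v = P v) (v w : V) :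
    (∑ u : V, P u) * Aop G P v w = Aop G P v w := by
  simp only [Aop]
  by_cases h : G.Adj v w
  · rw [dif_pos h, Finset.sum_mul, Finset.sum_eq_single v]
    · exact P_mul_Amap hidem h
    · intro u _ hu
      exact P_mul_Amap_ne hloc hloc' h hu
    · intro h'
      exact absurd (Finset.mem_univ _) h'
  · rw [dif_neg h, mul_zero]

end Aux

theorem trace_restrict_eq_trace {K : Type*} [Field K] {E : Type*} [AddCommGroup E] [Module K E]
    [FiniteDimensional K E] (p : Submodule K E) (f : E →ₗ[K] E) (hf : ∀ x ∈ p, f x ∈ p)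
    (hall : ∀ x, f x ∈ p) :
    LinearMap.trace K p (f.restrict hf) = LinearMap.trace K E f := by
  have h1 : f.restrict hf = (f.codRestrict p hall) ∘ₗ p.subtype := by
    ext x
    rfl
  rw [h1, LinearMap.trace_comp_comm', LinearMap.subtype_comp_codRestrict]

section Analytic

open NormedSpace

variable {ι : Type*} [Fintype ι] [DecidableEq ι]

attribute [local instance] Matrix.linftyOpNormedRing Matrix.linftyOpNormedAlgebra

noncomputable def traceCLM : Matrix ι ι ℂ →L[ℂ] ℂ :=
  LinearMap.toContinuousLinearMap (Matrix.traceLinearMap ι ℂ ℂ)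

theorem traceCLM_apply (A : Matrix ι ι ℂ) : traceCLM A = A.trace := rfl

theorem summable_smul_pow (A : Matrix ι ι ℂ) (z : ℂ) :
    Summable fun k : ℕ => (z ^ k / (k.factorial : ℂ)) • A ^ k := by
  refine (expSeries_summable' (𝕂 := ℂ) (z • A)).congr fun n => ?_
  rw [smul_pow, smul_smul, div_eq_mul_inv, mul_comm]

theorem summable_trace_pow (A : Matrix ι ι ℂ) (z : ℂ) :
    Summable fun k : ℕ => z ^ k / (k.factorial : ℂ) * (A ^ k).trace := by
  have h2 := (summable_smul_pow A z).map (traceCLM (ι := ι)).toLinearMap.toAddMonoidHom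
    (traceCLM (ι := ι)).continuous
  refine h2.congr fun n => ?_
  show traceCLM ((z ^ n / (n.factorial : ℂ)) • A ^ n) = _
  rw [map_smul, traceCLM_apply, smul_eq_mul]

theorem trace_exp_smul (A : Matrix ι ι ℂ) (z : ℂ) :
    (exp (z • A)).trace = ∑' k : ℕ, z ^ k / (k.factorial : ℂ) * (A ^ k).trace := by
  have h2 : exp (z • A) = ∑' k : ℕ, (z ^ k / (k.factorial : ℂ)) • A ^ k := by
    rw [exp_eq_tsum (𝕂 := ℂ)]
    exact tsum_congr fun n => by rw [smul_pow, smul_smul, div_eq_mul_inv, mul_comm]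
  rw [h2, ← traceCLM_apply, ContinuousLinearMap.map_tsum _ (summable_smul_pow A z)]
  exact tsum_congr fun n => by rw [map_smul, traceCLM_apply, smul_eq_mul]

theorem tsum_trace_exp_eq (A : Matrix ι ι ℂ) (z : ℂ) :
    ∑' n : ℕ, (-z) ^ n / (n.factorial : ℂ) * (((1 : Matrix ι ι ℂ) - A) ^ n).trace
      = Complex.exp (-z) * ∑' k : ℕ, z ^ k / (k.factorial : ℂ) * (A ^ k).trace := by
  rw [← trace_exp_smul, ← trace_exp_smul]
  have hcomm : Commute ((-z) • (1 : Matrix ι ι ℂ)) (z • A) :=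
    (Commute.one_left (z • A)).smul_left (-z)
  have hsplit : (-z) • ((1 : Matrix ι ι ℂ) - A) = (-z) • (1 : Matrix ι ι ℂ) + z • A := by
    rw [smul_sub, neg_smul z A, sub_neg_eq_add]
  have hexp1 : exp ((-z) • (1 : Matrix ι ι ℂ)) = Complex.exp (-z) • 1 := by
    rw [← Algebra.algebraMap_eq_smul_one]
    erw [← algebraMap_exp_comm (𝕂 := ℂ) (𝔸 := Matrix ι ι ℂ) (-z)]
    rw [Algebra.algebraMap_eq_smul_one, Complex.exp_eq_exp_ℂ]
  rw [hsplit, Matrix.exp_add_of_commute _ _ hcomm, hexp1, smul_mul_assoc, one_mul, Matrix.trace_smul,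
    smul_eq_mul]

end Analytic

theorem trace_one_sub_pow {R Mo ι : Type*} [CommRing R] [AddCommGroup Mo] [Module R Mo]
    [Fintype ι] [DecidableEq ι] (b : Module.Basis ι R Mo) (f : Module.End R Mo) (n : ℕ) :
    LinearMap.trace R Mo ((1 - f) ^ n)
      = (((1 : Matrix ι ι R) - LinearMap.toMatrix b b f) ^ n).trace := by
  rw [LinearMap.trace_eq_matrix_trace R b]
  congr 1
  have h : ∀ g : Module.End R Mo, LinearMap.toMatrix b b g = (LinearMap.toMatrixAlgEquiv b) g :=
    fun _ => rfl
  rw [h, map_pow]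
  congr 1
  simp only [map_sub, map_one]
  rw [← h]

theorem trace_pow_toMatrix {R Mo ι : Type*} [CommRing R] [AddCommGroup Mo] [Module R Mo]
    [Fintype ι] [DecidableEq ι] (b : Module.Basis ι R Mo) (f : Module.End R Mo) (n : ℕ) :
    LinearMap.trace R Mo (f ^ n) = ((LinearMap.toMatrix b b f) ^ n).trace := by
  rw [LinearMap.trace_eq_matrix_trace R b]
  congr 1
  have h : ∀ g : Module.End R Mo, LinearMap.toMatrix b b g = (LinearMap.toMatrixAlgEquiv b) g :=
    fun _ => rfl
  rw [h, map_pow, ← h]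


/-- Trace formula ("discrete path integral") for the generalised discrete Laplacian
`Δ̂_𝒢 = Id − M_𝒢` of a vertex space `𝒢 = ⊕_v 𝒢_v` (given by local orthogonal projections
`P_v`) on a finite simple graph with `ℓ_e = 1`:
`tr e^{−tΔ̂_𝒢} = e^{−t} Σ_{n≥0} tⁿ/n! Σ_{c ∈ C_n} W_𝒢(c)` (the `n = 0` term being
`Σ_v dim 𝒢_v = dim 𝒢`). -/
theorem stmt15 {V : Type*} [Fintype V] [DecidableEq V] (G : SimpleGraph V)
    [DecidableRel G.Adj]
    (P : V → Module.End ℂ (GFlag G → ℂ))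
    (hidem : ∀ v, P v ∘ₗ P v = P v)
    (hsa : ∀ v (F F' : GFlag G → ℂ),
      ∑ p : GFlag G, P v F p * conj' (F' p) = ∑ p : GFlag G, F p * conj' (P v F' p))
    (hloc : ∀ v (F : GFlag G → ℂ) (p : GFlag G), p.1.1 ≠ v → P v F p = 0)
    (hloc' : ∀ v (F : GFlag G → ℂ), (∀ p : GFlag G, p.1.1 = v → F p = 0) → P v F = 0)
    (M : Module.End ℂ (GFlag G → ℂ))
    (hM : M = ∑ v : V, ∑ w : V,
      if h : G.Adj v w then Amap G P h else 0)
    (𝒢 : Submodule ℂ (GFlag G → ℂ)) (h𝒢 : 𝒢 = LinearMap.range (∑ v : V, P v))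
    (hMG : ∀ x ∈ 𝒢, M x ∈ 𝒢)
    (t : ℝ) (ht : 0 < t) :
    ∑' n : ℕ, (-(t : ℂ)) ^ n / (n.factorial : ℂ) *
        LinearMap.trace ℂ 𝒢 ((1 - M.restrict hMG) ^ n)
      = Complex.exp (-(t : ℂ)) * ((Module.finrank ℂ 𝒢 : ℂ) +
          ∑' n : ℕ, (t : ℂ) ^ (n + 1) / ((n + 1).factorial : ℂ) *
            ∑ c : ClosedPath G (n + 1), pathWeight G P c) := by
  classical
  have hM' : M = ∑ v : V, ∑ w : V, Aop G P v w := hM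
  have hQM : (∑ u : V, P u) * M = M := by
    conv_lhs => rw [hM']
    simp only [Finset.mul_sum]
    conv_rhs => rw [hM']
    exact Finset.sum_congr rfl fun v _ =>
      Finset.sum_congr rfl fun w _ => Q_mul_Aop hloc hloc' hidem v w
  have hrangeM : ∀ y, M y ∈ 𝒢 := by
    intro y
    rw [h𝒢]
    refine ⟨M y, ?_⟩
    conv_rhs => rw [← hQM]
    rfl
  -- trace of powers of the restriction
  have htrk : ∀ k : ℕ, LinearMap.trace ℂ 𝒢 ((M.restrict hMG) ^ (k + 1))
      = ∑ c : ClosedPath G (k + 1), pathWeight G P c := by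
    intro k
    have hall : ∀ x, (M ^ (k + 1)) x ∈ 𝒢 := fun x => by
      rw [pow_succ, Module.End.mul_apply]
      exact Module.End.pow_apply_mem_of_forall_mem k hMG (M x) (hrangeM x)
    rw [Module.End.pow_restrict,
      trace_restrict_eq_trace 𝒢 (M ^ (k + 1)) (Module.End.pow_apply_mem_of_forall_mem (k + 1) hMG)
        hall]
    rw [hM', Aop_sum_pow hloc hloc' hidem k, map_sum]
    exact trace_sum_chainProd hloc hloc' hidem k
  -- matrix of the restriction
  let b := Module.Free.chooseBasis ℂ 𝒢
  let N : Matrix _ _ ℂ := LinearMap.toMatrix b b (M.restrict hMG)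
  have hmat : ∀ n : ℕ, LinearMap.trace ℂ 𝒢 ((1 - M.restrict hMG) ^ n)
      = (((1 : Matrix _ _ ℂ) - N) ^ n).trace := fun n =>
    trace_one_sub_pow b (M.restrict hMG) n
  have hmat2 : ∀ k : ℕ, LinearMap.trace ℂ 𝒢 ((M.restrict hMG) ^ k) = (N ^ k).trace := fun k =>
    trace_pow_toMatrix b (M.restrict hMG) k
  calc ∑' n : ℕ, (-(t : ℂ)) ^ n / (n.factorial : ℂ) *
        LinearMap.trace ℂ 𝒢 ((1 - M.restrict hMG) ^ n)
      = ∑' n : ℕ, (-(t : ℂ)) ^ n / (n.factorial : ℂ)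
          * (((1 : Matrix _ _ ℂ) - N) ^ n).trace := tsum_congr fun n => by rw [hmat n]
    _ = Complex.exp (-(t : ℂ)) * ∑' k : ℕ, (t : ℂ) ^ k / (k.factorial : ℂ) * (N ^ k).trace :=
        tsum_trace_exp_eq N (t : ℂ)
    _ = Complex.exp (-(t : ℂ)) * ((Module.finrank ℂ 𝒢 : ℂ) +
          ∑' n : ℕ, (t : ℂ) ^ (n + 1) / ((n + 1).factorial : ℂ) *
            ∑ c : ClosedPath G (n + 1), pathWeight G P c) := by
        congr 1
        rw [Summable.tsum_eq_zero_add (summable_trace_pow N (t : ℂ))]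
        congr 1
        · rw [← hmat2 0, pow_zero, pow_zero, Nat.factorial_zero, Nat.cast_one, div_one, one_mul,
            LinearMap.trace_one]
        · exact tsum_congr fun k => by rw [← hmat2 (k + 1), htrk k]
end

section
/- For a finite simple r-regular graph G with standard vertex space, the heat trace satisfies tr e^{−tΔ̂^std} = e^{−t} Σ_{n=0}^∞ (tⁿ / (rⁿ n!)) |C_n|, where |C_n| is the number of properly closed paths of combinatorial length n; in particular |C₀| = |V|, |C₁| = 0, and |C₂| = 2|E|. -/
open Finset

/-- The transition (averaging) operator `M = (1/r)·A` of an `r`-regular simple graph. -/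
noncomputable def Mstd {V : Type*} [Fintype V] [DecidableEq V] (G : SimpleGraph V)
    [DecidableRel G.Adj] (r : ℕ) : Module.End ℂ (V → ℂ) where
  toFun F := fun v => (r : ℂ)⁻¹ * ∑ w ∈ G.neighborFinset v, F w
  map_add' F F' := by
    funext v
    simp [Finset.sum_add_distrib, mul_add]
  map_smul' c F := by
    funext v
    simp [Finset.mul_sum]
    exact Finset.sum_congr rfl fun x _ => by ring

open Matrix

set_option maxHeartbeats 1000000

section Helpers
variable {V : Type*} [Fintype V] [DecidableEq V]

lemma pow_apply_tuple {R : Type*} [CommSemiring R] (B : Matrix V V R) : ∀ (n : ℕ) (u v : V),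
    (B ^ (n+1)) u v = ∑ c : Fin n → V, ∏ i : Fin (n+1),
      B ((Fin.cons u (Fin.snoc c v) : Fin (n+2) → V) i.castSucc)
        ((Fin.cons u (Fin.snoc c v) : Fin (n+2) → V) i.succ) := by
  intro n
  induction n with
  | zero =>
    intro u v
    simp [Fin.prod_univ_one, Fin.snoc]
  | succ n ih =>
    intro u v
    rw [pow_succ', Matrix.mul_apply]
    simp_rw [ih]
    rw [← (Fin.consEquiv (fun _ : Fin (n+1) => V)).sum_comp
      (fun c => ∏ i : Fin (n+2),
        B ((Fin.cons u (Fin.snoc c v) : Fin (n+3) → V) i.castSucc)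
          ((Fin.cons u (Fin.snoc c v) : Fin (n+3) → V) i.succ))]
    rw [Fintype.sum_prod_type]
    refine Finset.sum_congr rfl fun w _ => ?_
    rw [Finset.mul_sum]
    refine Finset.sum_congr rfl fun c _ => ?_
    have hd : (Fin.cons u (Fin.snoc (Fin.cons w c) v) : Fin (n+3) → V)
        = Fin.cons u (Fin.cons w (Fin.snoc c v)) := by
      rw [← Fin.cons_snoc_eq_snoc_cons]
    have hce : ((Fin.consEquiv fun _ : Fin (n+1) => V) (w, c) : Fin (n+1) → V)
        = Fin.cons w c := rfl
    rw [hce]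
    conv_rhs => rw [hd, Fin.prod_univ_succ]
    simp only [← Fin.succ_castSucc, Fin.cons_succ, Fin.cons_zero, Fin.castSucc_zero,
      Fin.succ_zero_eq_one, Fin.cons_one]

lemma trace_pow_tuple {R : Type*} [CommSemiring R] (B : Matrix V V R) (m : ℕ) :
    (B ^ (m+1)).trace = ∑ e : Fin (m+1) → V, ∏ i : Fin (m+1),
      B (e i) (e (finRotate (m+1) i)) := by
  rw [Matrix.trace]
  simp only [Matrix.diag_apply]
  simp_rw [pow_apply_tuple]
  have key := Equiv.sum_comp ((Fin.consEquiv fun _ : Fin (m+1) => V) :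
      V × (Fin m → V) ≃ (Fin (m+1) → V))
    (fun e : Fin (m+1) → V => ∏ i : Fin (m+1), B (e i) (e (finRotate (m+1) i)))
  rw [← key, Fintype.sum_prod_type]
  refine Finset.sum_congr rfl fun u _ => Finset.sum_congr rfl fun c _ => ?_
  have hce : ((Fin.consEquiv fun _ : Fin (m+1) => V) (u, c) : Fin (m+1) → V) = Fin.cons u c := rfl
  rw [hce]
  refine Finset.prod_congr rfl fun i _ => ?_
  congr 1
  · refine Fin.cases ?_ (fun j => ?_) i
    · simp
    · rw [← Fin.succ_castSucc, Fin.cons_succ, Fin.snoc_castSucc, Fin.cons_succ]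
  · refine Fin.lastCases ?_ (fun j => ?_) i
    · rw [Fin.succ_last, ← Fin.succ_last, Fin.cons_succ, Fin.snoc_last, finRotate_succ_apply,
        Fin.last_add_one, Fin.cons_zero]
    · rw [Fin.cons_succ, Fin.snoc_castSucc, finRotate_succ_apply, Fin.coeSucc_eq_succ,
        Fin.cons_succ]

lemma card_closedPath (G : SimpleGraph V) [DecidableRel G.Adj] (m : ℕ) :
    Fintype.card (ClosedPath G (m+1)) = ((G.adjMatrix ℕ) ^ (m+1)).trace := by
  rw [trace_pow_tuple, Fintype.card_subtype, Finset.card_filter]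
  refine Finset.sum_congr rfl fun e _ => ?_
  simp only [SimpleGraph.adjMatrix_apply]
  rw [Finset.prod_boole]
  simp

lemma adj_pow_entry_le (G : SimpleGraph V) [DecidableRel G.Adj] {r : ℕ}
    (hreg : G.IsRegularOfDegree r) : ∀ (n : ℕ) (u v : V), ((G.adjMatrix ℕ) ^ n) u v ≤ r ^ n := by
  intro n
  induction n with
  | zero =>
    intro u v
    rw [pow_zero, pow_zero, Matrix.one_apply]
    split <;> omega
  | succ n ih =>
    intro u v
    rw [pow_succ', SimpleGraph.adjMatrix_mul_apply]
    calc ∑ w ∈ G.neighborFinset u, ((G.adjMatrix ℕ) ^ n) w v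
        ≤ ∑ _w ∈ G.neighborFinset u, r ^ n := Finset.sum_le_sum fun w _ => ih w v
      _ = G.degree u * r ^ n := by rw [Finset.sum_const, smul_eq_mul, SimpleGraph.card_neighborFinset_eq_degree]
      _ = r ^ (n+1) := by rw [hreg u, pow_succ']

lemma trace_pow_le (G : SimpleGraph V) [DecidableRel G.Adj] {r : ℕ}
    (hreg : G.IsRegularOfDegree r) (n : ℕ) :
    ((G.adjMatrix ℕ) ^ n).trace ≤ Fintype.card V * r ^ n := by
  rw [Matrix.trace]
  calc ∑ u : V, ((G.adjMatrix ℕ) ^ n).diag u ≤ ∑ _u : V, r ^ n :=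
      Finset.sum_le_sum fun u _ => adj_pow_entry_le G hreg n u u
    _ = Fintype.card V * r ^ n := by rw [Finset.sum_const, smul_eq_mul, Finset.card_univ]

lemma Mstd_eq (G : SimpleGraph V) [DecidableRel G.Adj] (r : ℕ) :
    Mstd G r = (r : ℂ)⁻¹ • (Matrix.toLinAlgEquiv' (G.adjMatrix ℂ) : Module.End ℂ (V → ℂ)) := by
  refine LinearMap.ext fun F => funext fun v => ?_
  show (r : ℂ)⁻¹ * ∑ w ∈ G.neighborFinset v, F w = ((r : ℂ)⁻¹ • (Matrix.toLinAlgEquiv' (G.adjMatrix ℂ)) F) v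
  simp only [LinearMap.smul_apply, Pi.smul_apply, smul_eq_mul]
  congr 1
  have : (Matrix.toLinAlgEquiv' (G.adjMatrix ℂ)) F = (G.adjMatrix ℂ).mulVec F := rfl
  rw [this, SimpleGraph.adjMatrix_mulVec_apply]

lemma trace_toLin (B : Matrix V V ℂ) :
    LinearMap.trace ℂ (V → ℂ) (Matrix.toLinAlgEquiv' B) = B.trace := by
  rw [LinearMap.trace_eq_matrix_trace ℂ (Pi.basisFun ℂ V), LinearMap.toMatrix_eq_toMatrix']
  congr 1
  exact LinearMap.toMatrix'_toLin' B

lemma trace_Mstd_pow (G : SimpleGraph V) [DecidableRel G.Adj] (r : ℕ) (n : ℕ) :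
    LinearMap.trace ℂ (V → ℂ) ((Mstd G r) ^ n)
      = ((r : ℂ)⁻¹) ^ n * (((G.adjMatrix ℕ) ^ n).trace : ℂ) := by
  rw [Mstd_eq, smul_pow, _root_.map_smul, smul_eq_mul, ← _root_.map_pow, trace_toLin]
  congr 1
  have hmap : (G.adjMatrix ℂ) = (Nat.castRingHom ℂ).mapMatrix (G.adjMatrix ℕ) := by
    ext i j
    simp [apply_ite (Nat.cast : ℕ → ℂ)]
  rw [hmap, ← map_pow]
  simp [Matrix.trace, Matrix.diag, RingHom.mapMatrix_apply, Matrix.map_apply]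

lemma trace_one_sub_pow_s16 (G : SimpleGraph V) [DecidableRel G.Adj] (r : ℕ) (n : ℕ) :
    LinearMap.trace ℂ (V → ℂ) ((1 - Mstd G r) ^ n)
      = ∑ k ∈ Finset.range (n+1), (n.choose k : ℂ) * (-1 : ℂ) ^ k *
          LinearMap.trace ℂ (V → ℂ) ((Mstd G r) ^ k) := by
  have hsub : (1 : Module.End ℂ (V → ℂ)) - Mstd G r = -(Mstd G r) + 1 := by rw [sub_eq_add_neg, add_comm]
  rw [hsub, (Commute.one_right (-(Mstd G r))).add_pow, map_sum]
  refine Finset.sum_congr rfl fun k hk => ?_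
  rw [one_pow, mul_one]
  have h1 : (-(Mstd G r)) ^ k = (-1 : ℂ) ^ k • (Mstd G r) ^ k := by
    rw [← smul_pow]
    congr 1
    simp
  have h2 : ((-1 : ℂ) ^ k • (Mstd G r) ^ k) * ((n.choose k : ℕ) : Module.End ℂ (V → ℂ))
      = (n.choose k) • ((-1 : ℂ) ^ k • (Mstd G r) ^ k) := by
    rw [(Nat.commute_cast _ (n.choose k)).eq, nsmul_eq_mul]
  rw [h1, h2, map_nsmul, LinearMap.map_smul]
  simp [nsmul_eq_mul]
  ring

end Helpers

/-- Heat trace formula for the standard discrete Laplacian `Δ̂ = Id − M` of a finite simple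
`r`-regular graph: `tr e^{−tΔ̂} = e^{−t} Σ_{n≥0} tⁿ/(rⁿ n!)·|C_n|` (the `n = 0` term being
`|C₀| = |V|`); in particular `|C₁| = 0` and `|C₂| = 2|E|`. -/
theorem stmt16 {V : Type*} [Fintype V] [DecidableEq V] (G : SimpleGraph V)
    [DecidableRel G.Adj] (r : ℕ) (hreg : G.IsRegularOfDegree r) (hr : 0 < r)
    (t : ℝ) (ht : 0 < t) :
    (∑' n : ℕ, (-(t : ℂ)) ^ n / (n.factorial : ℂ) *
        LinearMap.trace ℂ (V → ℂ) ((1 - Mstd G r) ^ n)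
      = Complex.exp (-(t : ℂ)) * ((Fintype.card V : ℂ) +
          ∑' n : ℕ, (t : ℂ) ^ (n + 1) / ((r : ℂ) ^ (n + 1) * ((n + 1).factorial : ℂ)) *
            (Fintype.card (ClosedPath G (n + 1)) : ℂ))) ∧
    Fintype.card (ClosedPath G 1) = 0 ∧
    Fintype.card (ClosedPath G 2) = 2 * G.edgeFinset.card := by
  have hrC : ((r : ℂ)) ≠ 0 := Nat.cast_ne_zero.mpr hr.ne'
  refine ⟨?_, ?_, ?_⟩
  · -- main trace formula
    set a : ℕ → ℂ := fun k => LinearMap.trace ℂ (V → ℂ) ((Mstd G r) ^ k) with ha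
    set b : ℕ → ℂ := fun k => (t : ℂ) ^ k * a k / (k.factorial : ℂ) with hbdef
    set g : ℕ → ℂ := fun m => (-(t : ℂ)) ^ m / (m.factorial : ℂ) with hgdef
    have hanorm : ∀ k, ‖a k‖ ≤ (Fintype.card V : ℝ) := by
      intro k
      rw [ha]
      simp only
      rw [trace_Mstd_pow]
      rw [norm_mul]
      have h1 : ‖((r:ℂ)⁻¹) ^ k‖ = ((r:ℝ)⁻¹) ^ k := by
        rw [norm_pow, norm_inv, Complex.norm_natCast]
      have h2 : ‖((((G.adjMatrix ℕ) ^ k).trace : ℕ) : ℂ)‖ = (((G.adjMatrix ℕ) ^ k).trace : ℝ) := by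
        rw [Complex.norm_natCast]
      rw [h1, h2]
      have h3 : ((((G.adjMatrix ℕ) ^ k).trace : ℕ) : ℝ) ≤ (Fintype.card V : ℝ) * (r:ℝ) ^ k := by
        exact_mod_cast trace_pow_le G hreg k
      have h4 : (0:ℝ) < (r:ℝ) ^ k := by positivity
      calc ((r:ℝ)⁻¹) ^ k * (((G.adjMatrix ℕ) ^ k).trace : ℝ)
          ≤ ((r:ℝ)⁻¹) ^ k * ((Fintype.card V : ℝ) * (r:ℝ) ^ k) := by
            apply mul_le_mul_of_nonneg_left h3 (by positivity)
        _ = (Fintype.card V : ℝ) * (((r:ℝ)⁻¹) ^ k * (r:ℝ) ^ k) := by ring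
        _ = (Fintype.card V : ℝ) := by
            rw [← mul_pow, inv_mul_cancel₀ (by exact_mod_cast hr.ne'), one_pow, mul_one]
    have hbnorm : Summable fun k => ‖b k‖ := by
      refine Summable.of_nonneg_of_le (fun k => norm_nonneg _) ?_
        ((Real.summable_pow_div_factorial t).mul_left (Fintype.card V : ℝ))
      · intro k
        rw [hbdef]
        simp only
        rw [norm_div, norm_mul, norm_pow, Complex.norm_real, Real.norm_of_nonneg ht.le,
          Complex.norm_natCast]
        rw [div_le_iff₀ (by positivity)]
        calc t ^ k * ‖a k‖ ≤ t ^ k * (Fintype.card V : ℝ) :=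
            mul_le_mul_of_nonneg_left (hanorm k) (by positivity)
          _ = (Fintype.card V : ℝ) * (t ^ k / k.factorial) * k.factorial := by
            field_simp
    have hgnorm : Summable fun m => ‖g m‖ := by
      have : ∀ m, ‖g m‖ = t ^ m / m.factorial := by
        intro m
        rw [hgdef]
        simp only
        rw [norm_div, norm_pow, norm_neg, Complex.norm_real, Real.norm_of_nonneg ht.le,
          Complex.norm_natCast]
      rw [funext this]
      exact Real.summable_pow_div_factorial t
    -- termwise identity
    have hterm : ∀ n : ℕ, (-(t : ℂ)) ^ n / (n.factorial : ℂ) *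
        LinearMap.trace ℂ (V → ℂ) ((1 - Mstd G r) ^ n)
        = ∑ k ∈ Finset.range (n+1), b k * g (n - k) := by
      intro n
      rw [trace_one_sub_pow_s16, Finset.mul_sum]
      refine Finset.sum_congr rfl fun k hk => ?_
      have hk' : k ≤ n := Nat.lt_succ_iff.mp (Finset.mem_range.mp hk)
      have hC : ((n.choose k : ℂ)) * (k.factorial : ℂ) * ((n-k).factorial : ℂ)
          = (n.factorial : ℂ) := by
        exact_mod_cast congrArg (Nat.cast : ℕ → ℂ) (Nat.choose_mul_factorial_mul_factorial hk')
      have hkf : (k.factorial : ℂ) ≠ 0 := Nat.cast_ne_zero.mpr (Nat.factorial_ne_zero k)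
      have hnkf : ((n-k).factorial : ℂ) ≠ 0 := Nat.cast_ne_zero.mpr (Nat.factorial_ne_zero _)
      have hnf : (n.factorial : ℂ) ≠ 0 := Nat.cast_ne_zero.mpr (Nat.factorial_ne_zero n)
      have hn : (-(t:ℂ)) ^ n = (-(t:ℂ)) ^ k * (-(t:ℂ)) ^ (n-k) := by
        rw [← pow_add, Nat.add_sub_cancel' hk']
      have key : ((-(t:ℂ))) ^ k * (-1:ℂ) ^ k = (t:ℂ) ^ k := by
        rw [← mul_pow]
        norm_num
      rw [hbdef, hgdef]
      simp only
      rw [hn]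
      field_simp
      linear_combination ((-(t:ℂ))^(n-k) * (n.choose k : ℂ) * a k * (k.factorial : ℂ) *
          ((n-k).factorial : ℂ)) * key +
        ((t:ℂ)^k * (-(t:ℂ))^(n-k) * a k) * hC
    rw [tsum_congr hterm, ← tsum_mul_tsum_eq_tsum_sum_range_of_summable_norm hbnorm hgnorm]
    have hg : (∑' m, g m) = Complex.exp (-(t:ℂ)) := by
      rw [Complex.exp_eq_exp_ℂ, NormedSpace.exp_eq_tsum_div]
    have hbsum : Summable b := hbnorm.of_norm
    have hb : (∑' k, b k) = (Fintype.card V : ℂ) +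
        ∑' n : ℕ, (t : ℂ) ^ (n + 1) / ((r : ℂ) ^ (n + 1) * ((n + 1).factorial : ℂ)) *
          (Fintype.card (ClosedPath G (n + 1)) : ℂ) := by
      rw [Summable.tsum_eq_zero_add hbsum]
      congr 1
      · rw [hbdef]
        simp only
        rw [pow_zero, one_mul, Nat.factorial_zero, Nat.cast_one, div_one, ha]
        simp only
        rw [trace_Mstd_pow, pow_zero, pow_zero, one_mul, Matrix.trace_one]
        simp
      · refine tsum_congr fun n => ?_
        rw [hbdef]
        simp only
        rw [ha]
        simp only
        rw [trace_Mstd_pow, ← card_closedPath]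
        have hfact : (((n+1).factorial : ℂ)) ≠ 0 := Nat.cast_ne_zero.mpr (Nat.factorial_ne_zero _)
        field_simp
        have hrr : (1 / (r:ℂ)) ^ (n+1) * (r:ℂ) ^ (n+1) = 1 := by
          rw [← mul_pow, one_div, inv_mul_cancel₀ hrC, one_pow]
        linear_combination ((t:ℂ) ^ (n + 1) * (Fintype.card (ClosedPath G (n + 1)) : ℂ)) * hrr
    rw [hg, hb, mul_comm]
  · -- card C_1 = 0
    have : IsEmpty (ClosedPath G 1) := by
      refine ⟨fun c => ?_⟩
      have h2 := c.2 0
      have h0 : (finRotate 1) 0 = 0 := rfl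
      rw [h0] at h2
      exact G.irrefl h2
    exact Fintype.card_eq_zero
  · -- card C_2 = 2 * edges
    rw [card_closedPath G 1, pow_two]
    have htr : ((G.adjMatrix ℕ) * (G.adjMatrix ℕ)).trace = ∑ u : V, G.degree u := by
      rw [Matrix.trace]
      refine Finset.sum_congr rfl fun u _ => ?_
      simpa using SimpleGraph.adjMatrix_mul_self_apply_self G (α := ℕ) u
    rw [htr, SimpleGraph.sum_degrees_eq_twice_card_edges]
end
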